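/- Let n ≥ 2 and fix 1 ≤ j ≤ n. Let Θ_j : ℝ → ℍ be a differentiable curve with |Θ_j(t)| = 1 for all t, and let w_{ij} : ℝ → ℍ (1 ≤ i ≤ n−1) be differentiable curves; set |w_j(t)|² := Σ_{i=1}^{n−1} |w_{ij}(t)|², and define q_{ij}(t) := w_{ij}(t)Θ_j(t)/√(1+|w_j(t)|²) for 1 ≤ i ≤ n−1 and q_{nj}(t) := Θ_j(t)/√(1+|w_j(t)|²). Then for every t, ½ Σ_{k=1}^{n} ( \overline{q_{kj}(t)} q'_{kj}(t) − \overline{q'_{kj}(t)} q_{kj}(t) ) = Θ_j(t)^{−1} Θ'_j(t) + ½ Θ_j(t)^{−1} ( Σ_{k=1}^{n−1} ( \overline{w_{kj}(t)} w'_{kj}(t) − \overline{w'_{kj}(t)} w_{kj}(t) ) / (1+|w_j(t)|²) ) Θ_j(t). -/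

import Mathlib

open Quaternion

instance : StarModule ℝ ℍ[ℝ] :=
  ⟨fun r a => by rw [Quaternion.star_smul, star_trivial r]⟩

lemma auxh (a : ℍ[ℝ]) : star a * a = ((‖a‖ ^ 2 : ℝ) : ℍ[ℝ]) := by
  rw [Quaternion.star_mul_self, Quaternion.normSq_eq_norm_mul_self, ← sq]

lemma aux2 (ft c : ℝ) (T B : ℍ[ℝ]) :
    star (ft • B + c • T) * (ft • T) - star (ft • T) * (ft • B + c • T)
      = (ft ^ 2) • (star B * T - star T * B) := by
  simp only [Quaternion.star_smul, star_add, smul_mul_assoc, mul_smul_comm, mul_add, add_mul,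
    smul_add, smul_sub, sq]
  module

lemma aux2' (ft c : ℝ) (T B : ℍ[ℝ]) :
    star (ft • T) * (ft • B + c • T) - star (ft • B + c • T) * (ft • T)
      = (ft ^ 2) • (star T * B - star B * T) := by
  simp only [Quaternion.star_smul, star_add, smul_mul_assoc, mul_smul_comm, mul_add, add_mul,
    smul_add, smul_sub, sq]
  module

lemma aux3 (ft c : ℝ) (a b T B : ℍ[ℝ]) :
    star (ft • (a * T)) * (ft • (b * T + a * B) + c • (a * T))
      - star (ft • (b * T + a * B) + c • (a * T)) * (ft • (a * T))
    = (ft ^ 2) • (star T * (star a * b - star b * a) * T)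
      + (ft ^ 2 * ‖a‖ ^ 2) • (star T * B - star B * T) := by
  have h2 : ∀ X : ℍ[ℝ], star a * (a * X) = ‖a‖ ^ 2 • X := fun X => by
    rw [← mul_assoc, auxh, Quaternion.coe_mul_eq_smul]
  simp only [Quaternion.star_smul, star_add, StarMul.star_mul, smul_mul_assoc, mul_smul_comm,
    mul_add, add_mul, sub_mul, mul_sub, smul_add, smul_sub, mul_assoc, sq]
  simp only [h2, mul_smul_comm, smul_smul]
  module

theorem connection_form_trivialization (n : ℕ) (hn : 2 ≤ n)
    (Θ : ℝ → ℍ[ℝ]) (hΘ : Differentiable ℝ Θ) (hΘ1 : ∀ t, ‖Θ t‖ = 1)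
    (w : Fin (n - 1) → ℝ → ℍ[ℝ]) (hw : ∀ i, Differentiable ℝ (w i))
    (q : Fin n → ℝ → ℍ[ℝ])
    (hq : ∀ (k : Fin n) (s : ℝ), q k s =
      if h : k.val < n - 1 then
        (Real.sqrt (1 + ∑ i, ‖w i s‖ ^ 2))⁻¹ • (w ⟨k.val, h⟩ s * Θ s)
      else (Real.sqrt (1 + ∑ i, ‖w i s‖ ^ 2))⁻¹ • Θ s)
    (t : ℝ) :
    (1/2 : ℝ) • ∑ k : Fin n,
        (star (q k t) * deriv (q k) t - star (deriv (q k) t) * q k t)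
      = (Θ t)⁻¹ * deriv Θ t
        + (1/2 : ℝ) • ((Θ t)⁻¹ *
            ((1 + ∑ i, ‖w i t‖ ^ 2)⁻¹ • ∑ k : Fin (n - 1),
              (star (w k t) * deriv (w k) t - star (deriv (w k) t) * w k t))
            * Θ t) := by
  obtain ⟨m, rfl⟩ : ∃ m, n = m + 1 := ⟨n - 1, by omega⟩
  clear hn
  have hrpos : ∀ s : ℝ, (0:ℝ) < 1 + ∑ i, ‖w i s‖ ^ 2 := fun s => by positivity
  have hrd : Differentiable ℝ (fun s => 1 + ∑ i : Fin (m + 1 - 1), ‖w i s‖ ^ 2) :=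
    (differentiable_const (1:ℝ)).add (Differentiable.fun_sum fun i _ => (hw i).norm_sq ℝ)
  obtain ⟨c, hf⟩ : ∃ c, HasDerivAt (fun s => (Real.sqrt (1 + ∑ i, ‖w i s‖ ^ 2))⁻¹) c t :=
    ⟨_, (((hrd t).hasDerivAt).sqrt (hrpos t).ne').inv (Real.sqrt_ne_zero'.mpr (hrpos t))⟩
  set ft : ℝ := (Real.sqrt (1 + ∑ i, ‖w i t‖ ^ 2))⁻¹ with hftdef
  have hΘd := (hΘ t).hasDerivAt
  -- value/derivative of the first m coordinates
  have hqc : ∀ i : Fin m, q (Fin.castSucc i)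
      = fun s => (Real.sqrt (1 + ∑ i, ‖w i s‖ ^ 2))⁻¹ • (w i s * Θ s) := by
    intro i; funext s
    rw [hq, dif_pos (show (Fin.castSucc i).val < m + 1 - 1 from i.isLt)]
    rfl
  have hderc : ∀ i : Fin m, HasDerivAt (q (Fin.castSucc i))
      (ft • (deriv (w i) t * Θ t + w i t * deriv Θ t) + c • (w i t * Θ t)) t := by
    intro i; rw [hqc i]
    exact hf.smul (((hw i t).hasDerivAt).mul hΘd)
  -- value/derivative of the last coordinate
  have hql : q (Fin.last m) = fun s => (Real.sqrt (1 + ∑ i, ‖w i s‖ ^ 2))⁻¹ • Θ s := by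
    funext s; rw [hq, dif_neg (by simp)]
  have hderl : HasDerivAt (q (Fin.last m)) (ft • deriv Θ t + c • Θ t) t := by
    rw [hql]; exact hf.smul hΘd
  -- skew-symmetry from |Θ| = 1
  have hsk : star (deriv Θ t) * Θ t + star (Θ t) * deriv Θ t = 0 := by
    have h1 : HasDerivAt (fun s => star (Θ s) * Θ s)
        (star (deriv Θ t) * Θ t + star (Θ t) * deriv Θ t) t := hΘd.star.mul hΘd
    have h2 : (fun s => star (Θ s) * Θ s) = fun _ => (1 : ℍ[ℝ]) := by
      funext s; rw [auxh, hΘ1 s]; norm_num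
    rw [h2] at h1
    exact h1.unique (hasDerivAt_const t 1)
  have hD : star (deriv Θ t) * Θ t = -(star (Θ t) * deriv Θ t) :=
    eq_neg_of_add_eq_zero_left hsk
  have hinv : (Θ t)⁻¹ = star (Θ t) := by
    rw [Quaternion.inv_def, Quaternion.normSq_eq_norm_mul_self, hΘ1]
    simp
  have hft2 : ft ^ 2 = (1 + ∑ i, ‖w i t‖ ^ 2)⁻¹ := by
    rw [hftdef, inv_pow, Real.sq_sqrt (hrpos t).le]
  have hft1 : (1 + ∑ i : Fin (m+1-1), ‖w i t‖ ^ 2)⁻¹ * (1 + ∑ i, ‖w i t‖ ^ 2) = 1 :=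
    inv_mul_cancel₀ (hrpos t).ne'
  -- compute each summand
  have e1 : ∀ i : Fin m,
      star (q (Fin.castSucc i) t) * deriv (q (Fin.castSucc i)) t
        - star (deriv (q (Fin.castSucc i)) t) * q (Fin.castSucc i) t
      = (ft ^ 2) • (star (Θ t) *
            (star (w i t) * deriv (w i) t - star (deriv (w i) t) * w i t) * Θ t)
        + (ft ^ 2 * ‖w i t‖ ^ 2) •
            (star (Θ t) * deriv Θ t - star (deriv Θ t) * Θ t) := by
    intro i
    rw [(hderc i).deriv, congrFun (hqc i) t]
    exact aux3 ft c (w i t) (deriv (w i) t) (Θ t) (deriv Θ t)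
  have e2 : star (q (Fin.last m) t) * deriv (q (Fin.last m)) t
        - star (deriv (q (Fin.last m)) t) * q (Fin.last m) t
      = (ft ^ 2) • (star (Θ t) * deriv Θ t - star (deriv Θ t) * Θ t) := by
    rw [hderl.deriv, congrFun hql t]
    exact aux2' ft c (Θ t) (deriv Θ t)
  rw [Fin.sum_univ_castSucc, e2, Finset.sum_congr rfl (fun i _ => e1 i),
    Finset.sum_add_distrib, ← Finset.smul_sum]
  have e3 : ∑ x : Fin m, (star (Θ t) *
        (star (w x t) * deriv (w x) t - star (deriv (w x) t) * w x t) * Θ t)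
      = star (Θ t) * (∑ k : Fin (m + 1 - 1),
        (star (w k t) * deriv (w k) t - star (deriv (w k) t) * w k t)) * Θ t := by
    rw [← Finset.sum_mul, ← Finset.mul_sum]
    rfl
  have e4 : ∑ x : Fin m, (ft ^ 2 * ‖w x t‖ ^ 2) •
        (star (Θ t) * deriv Θ t - star (deriv Θ t) * Θ t)
      = (ft ^ 2 * ∑ i : Fin (m + 1 - 1), ‖w i t‖ ^ 2) •
        (star (Θ t) * deriv Θ t - star (deriv Θ t) * Θ t) := by
    rw [← Finset.sum_smul, ← Finset.mul_sum]
    rfl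
  rw [e3, e4, hinv, mul_smul_comm, smul_mul_assoc, hD, hft2]
  match_scalars
  · ring
  · nlinarith [hft1]
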